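/- Let S be a finite nonempty set, let T ≥ 1, let X₀, X₁, …, X_T be distribution vectors on S, and let H₀, H₁, …, H_{T−1} be row-stochastic matrices on S, each with ergodicity coefficient at most γ where 0 ≤ γ < 1. For 0 ≤ i ≤ t ≤ T define H_{i:t} = H_i H_{i+1} ⋯ H_{t−1} (with H_{i:i} the identity matrix), for 1 ≤ i ≤ T define B_i = Σ_{t=1}^{i} X_t + Σ_{t=i+1}^{T} (H_{i:t})ᵀ X_i, and B₀ = Σ_{t=1}^{T} (H_{0:t})ᵀ X₀. Then for every 1 ≤ i ≤ T, ‖B_i − B_{i−1}‖₁ ≤ 2/(1 − γ). -/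

import Mathlib

open Finset Matrix BigOperators

/-- The partial product `H_{i:t} = H i * H (i+1) * ⋯ * H (t-1)`, with `H_{i:i} = 1`. -/
def prodSlice {S : Type*} [Fintype S] [DecidableEq S]
    (H : ℕ → Matrix S S ℝ) (i t : ℕ) : Matrix S S ℝ :=
  ((List.range (t - i)).map (fun j => H (i + j))).prod

section Aux

variable {S : Type*} [Fintype S] [DecidableEq S]

lemma prodSlice_self' (H : ℕ → Matrix S S ℝ) (i : ℕ) : prodSlice H i i = 1 := by
  simp [prodSlice]

lemma prodSlice_succ_left' (H : ℕ → Matrix S S ℝ) {i t : ℕ} (h : i < t) :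
    prodSlice H i t = H i * prodSlice H (i + 1) t := by
  unfold prodSlice
  have ht : t - i = (t - (i + 1)) + 1 := by omega
  rw [ht, List.range_succ_eq_map]
  simp only [List.map_cons, List.map_map, List.prod_cons, add_zero]
  have hf : ((fun j => H (i + j)) ∘ Nat.succ) = fun j => H (i + 1 + j) := by
    funext j
    show H (i + Nat.succ j) = H (i + 1 + j)
    rw [Nat.succ_eq_add_one, ← Nat.add_assoc, Nat.add_right_comm]
  rw [hf]

lemma sum_transpose_mulVec' (M : Matrix S S ℝ) (h : ∀ s, ∑ s', M s s' = 1) (z : S → ℝ) :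
    ∑ s, Mᵀ.mulVec z s = ∑ s, z s := by
  simp only [Matrix.mulVec, dotProduct, Matrix.transpose_apply]
  rw [Finset.sum_comm]
  refine Finset.sum_congr rfl fun s' _ => ?_
  rw [← Finset.sum_mul, h s', one_mul]

lemma erg_prodSlice (H : ℕ → Matrix S S ℝ) (γ : ℝ) (hγ0 : 0 ≤ γ) (T : ℕ)
    (hrowsum : ∀ t, t < T → ∀ s, ∑ s', H t s s' = 1)
    (herg : ∀ t, t < T → ∀ z : S → ℝ, (∑ s, z s) = 0 →
      ∑ s, |(H t)ᵀ.mulVec z s| ≤ γ * ∑ s, |z s|) :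
    ∀ k i, i + k ≤ T → ∀ z : S → ℝ, (∑ s, z s) = 0 →
      ∑ s, |(prodSlice H i (i + k))ᵀ.mulVec z s| ≤ γ ^ k * ∑ s, |z s| := by
  intro k
  induction k with
  | zero =>
    intro i _ z _
    simp [prodSlice_self', Matrix.transpose_one, Matrix.one_mulVec]
  | succ k ih =>
    intro i hik z hz
    have hi : i < T := by omega
    have hlt : i < i + (k + 1) := by omega
    have heq : i + (k + 1) = (i + 1) + k := by omega
    rw [prodSlice_succ_left' H hlt, heq, Matrix.transpose_mul]
    have hsw : ∑ s, ((H i)ᵀ.mulVec z) s = 0 := by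
      rw [sum_transpose_mulVec' _ (hrowsum i hi), hz]
    have h1 := ih (i + 1) (by omega) _ hsw
    have h2 := herg i hi z hz
    calc ∑ s, |((prodSlice H (i + 1) (i + 1 + k))ᵀ * (H i)ᵀ).mulVec z s|
        = ∑ s, |(prodSlice H (i + 1) (i + 1 + k))ᵀ.mulVec ((H i)ᵀ.mulVec z) s| := by
          rw [Matrix.mulVec_mulVec]
      _ ≤ γ ^ k * ∑ s, |((H i)ᵀ.mulVec z) s| := h1
      _ ≤ γ ^ k * (γ * ∑ s, |z s|) := by
          apply mul_le_mul_of_nonneg_left h2 (pow_nonneg hγ0 k)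
      _ = γ ^ (k + 1) * ∑ s, |z s| := by ring

end Aux

/-- Bounded differences of the Doob martingale: under uniform mixing with coefficient
`γ < 1`, every martingale difference satisfies `‖B i - B (i-1)‖₁ ≤ 2 / (1 - γ)`. -/
theorem doob_martingale_difference_bound {S : Type*} [Fintype S] [DecidableEq S] [Nonempty S]
    (T : ℕ) (hT : 1 ≤ T)
    (X : ℕ → S → ℝ)
    (hXnonneg : ∀ t, t ≤ T → ∀ s, 0 ≤ X t s)
    (hXsum : ∀ t, t ≤ T → ∑ s, X t s = 1)
    (H : ℕ → Matrix S S ℝ) (γ : ℝ) (hγ0 : 0 ≤ γ) (hγ1 : γ < 1)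
    (hnonneg : ∀ t, t < T → ∀ s s', 0 ≤ H t s s')
    (hrowsum : ∀ t, t < T → ∀ s, ∑ s', H t s s' = 1)
    (herg : ∀ t, t < T → ∀ z : S → ℝ, (∑ s, z s) = 0 →
      ∑ s, |(H t)ᵀ.mulVec z s| ≤ γ * ∑ s, |z s|)
    (B : ℕ → S → ℝ)
    (hB0 : B 0 = ∑ t ∈ Finset.Icc 1 T, ((prodSlice H 0 t)ᵀ).mulVec (X 0))
    (hBi : ∀ i, 1 ≤ i → i ≤ T →
      B i = (∑ t ∈ Finset.Icc 1 i, X t)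
        + ∑ t ∈ Finset.Icc (i + 1) T, ((prodSlice H i t)ᵀ).mulVec (X i)) :
    ∀ i, 1 ≤ i → i ≤ T →
      ∑ s, |(B i - B (i - 1)) s| ≤ 2 / (1 - γ) := by
  intro i hi1 hiT
  have hi1' : i - 1 + 1 = i := by omega
  have hipred : i - 1 < T := by omega
  set Y : S → ℝ := (H (i - 1))ᵀ.mulVec (X (i - 1)) with hYdef
  set z : S → ℝ := X i - Y with hzdef
  -- B (i-1) in a uniform form
  have hBprev : B (i - 1) = (∑ t ∈ Finset.Icc 1 (i - 1), X t)
      + ∑ t ∈ Finset.Icc i T, ((prodSlice H (i - 1) t)ᵀ).mulVec (X (i - 1)) := by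
    rcases eq_or_lt_of_le hi1 with h | h
    · have : i - 1 = 0 := by omega
      rw [this] at *
      rw [hB0]
      have : Finset.Icc 1 0 = (∅ : Finset ℕ) := by simp
      rw [this, Finset.sum_empty, zero_add]
      have hii : i = 1 := by omega
      rw [hii]
    · have h2 : 1 ≤ i - 1 := by omega
      rw [hBi (i - 1) h2 (by omega), hi1']
  -- split off term t = i
  have hIcc : Finset.Icc i T = insert i (Finset.Icc (i + 1) T) := by
    ext x
    simp only [Finset.mem_Icc, Finset.mem_insert]
    omega
  have hnotmem : i ∉ Finset.Icc (i + 1) T := by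
    simp only [Finset.mem_Icc]; omega
  have hterm : ((prodSlice H (i - 1) i)ᵀ).mulVec (X (i - 1)) = Y := by
    rw [prodSlice_succ_left' H (show i - 1 < i by omega), hi1', prodSlice_self', mul_one]
  have hfac : ∀ t ∈ Finset.Icc (i + 1) T,
      ((prodSlice H (i - 1) t)ᵀ).mulVec (X (i - 1)) = ((prodSlice H i t)ᵀ).mulVec Y := by
    intro t ht
    simp only [Finset.mem_Icc] at ht
    rw [prodSlice_succ_left' H (show i - 1 < t by omega), hi1', Matrix.transpose_mul,
      ← Matrix.mulVec_mulVec]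
  have hBprev2 : B (i - 1) = (∑ t ∈ Finset.Icc 1 (i - 1), X t)
      + (Y + ∑ t ∈ Finset.Icc (i + 1) T, ((prodSlice H i t)ᵀ).mulVec Y) := by
    rw [hBprev, hIcc, Finset.sum_insert hnotmem, hterm,
      Finset.sum_congr rfl hfac]
  -- key identity for the difference
  have hsum1 : ∑ t ∈ Finset.Icc 1 i, X t = (∑ t ∈ Finset.Icc 1 (i - 1), X t) + X i := by
    conv_lhs => rw [← hi1']
    rw [Finset.sum_Icc_succ_top (by omega), hi1']
  have key : B i - B (i - 1)
      = z + ∑ t ∈ Finset.Icc (i + 1) T, ((prodSlice H i t)ᵀ).mulVec z := by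
    rw [hBi i hi1 hiT, hBprev2, hsum1, hzdef]
    have hmv : ∀ t ∈ Finset.Icc (i + 1) T,
        ((prodSlice H i t)ᵀ).mulVec (X i - Y)
          = ((prodSlice H i t)ᵀ).mulVec (X i) - ((prodSlice H i t)ᵀ).mulVec Y := by
      intro t _; exact Matrix.mulVec_sub _ _ _
    rw [Finset.sum_congr rfl hmv, Finset.sum_sub_distrib]
    abel
  -- properties of z
  have hYsum : ∑ s, Y s = 1 := by
    rw [hYdef, sum_transpose_mulVec' _ (hrowsum (i - 1) hipred), hXsum (i - 1) (by omega)]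
  have hYnonneg : ∀ s, 0 ≤ Y s := by
    intro s
    rw [hYdef]
    apply Finset.sum_nonneg
    intro s' _
    exact mul_nonneg (hnonneg (i - 1) hipred s' s) (hXnonneg (i - 1) (by omega) s')
  have hzsum : ∑ s, z s = 0 := by
    simp only [hzdef, Pi.sub_apply, Finset.sum_sub_distrib, hXsum i hiT, hYsum, sub_self]
  have hznorm : ∑ s, |z s| ≤ 2 := by
    calc ∑ s, |z s| ≤ ∑ s, (X i s + Y s) := by
          apply Finset.sum_le_sum
          intro s _
          have := hXnonneg i hiT s
          have := hYnonneg s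
          simp only [hzdef, Pi.sub_apply]
          rw [abs_sub_comm]
          calc |Y s - X i s| ≤ |Y s| + |X i s| := abs_sub _ _
            _ = X i s + Y s := by rw [abs_of_nonneg, abs_of_nonneg] <;> linarith
      _ = 2 := by rw [Finset.sum_add_distrib, hXsum i hiT, hYsum]; norm_num
  -- each summand bound
  have hv : ∀ t ∈ Finset.Icc (i + 1) T,
      ∑ s, |((prodSlice H i t)ᵀ).mulVec z s| ≤ 2 * γ ^ (t - i) := by
    intro t ht
    simp only [Finset.mem_Icc] at ht
    have hti : i + (t - i) = t := by omega
    have := erg_prodSlice H γ hγ0 T hrowsum herg (t - i) i (by omega) z hzsum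
    rw [hti] at this
    calc ∑ s, |((prodSlice H i t)ᵀ).mulVec z s| ≤ γ ^ (t - i) * ∑ s, |z s| := this
      _ ≤ γ ^ (t - i) * 2 := by
          apply mul_le_mul_of_nonneg_left hznorm (pow_nonneg hγ0 _)
      _ = 2 * γ ^ (t - i) := by ring
  -- geometric sum bound
  have h1γ : (0:ℝ) < 1 - γ := by linarith
  have hgeom : ∀ n : ℕ, ∑ k ∈ Finset.range n, γ ^ k ≤ 1 / (1 - γ) := by
    intro n
    rw [geom_sum_eq (by linarith)]
    have he : (γ ^ n - 1) / (γ - 1) = (1 - γ ^ n) / (1 - γ) := by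
      rw [← neg_div_neg_eq]; ring_nf
    rw [he, div_le_div_iff₀ h1γ h1γ]
    nlinarith [pow_nonneg hγ0 n]
  have himg : Finset.Icc (i + 1) T = Finset.image (· + (i + 1)) (Finset.range (T - i)) := by
    ext x
    simp only [Finset.mem_Icc, Finset.mem_image, Finset.mem_range]
    constructor
    · rintro ⟨ha, hb⟩; exact ⟨x - (i + 1), by omega, by omega⟩
    · rintro ⟨a, ha, rfl⟩; omega
  have hgsum : ∑ t ∈ Finset.Icc (i + 1) T, γ ^ (t - i) ≤ γ / (1 - γ) := by
    rw [himg, Finset.sum_image (by intro a _ b _ h; simp only at h; omega)]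
    have : ∀ k ∈ Finset.range (T - i), γ ^ (k + (i + 1) - i) = γ * γ ^ k := by
      intro k _
      have : k + (i + 1) - i = k + 1 := by omega
      rw [this, pow_succ]; ring
    rw [Finset.sum_congr rfl this, ← Finset.mul_sum]
    calc γ * ∑ k ∈ Finset.range (T - i), γ ^ k ≤ γ * (1 / (1 - γ)) :=
          mul_le_mul_of_nonneg_left (hgeom _) hγ0
      _ = γ / (1 - γ) := by ring
  -- final bound
  rw [key]
  calc ∑ s, |(z + ∑ t ∈ Finset.Icc (i + 1) T, ((prodSlice H i t)ᵀ).mulVec z) s|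
      ≤ ∑ s, (|z s| + ∑ t ∈ Finset.Icc (i + 1) T, |((prodSlice H i t)ᵀ).mulVec z s|) := by
        apply Finset.sum_le_sum
        intro s _
        simp only [Pi.add_apply, Finset.sum_apply]
        calc |z s + ∑ t ∈ Finset.Icc (i + 1) T, ((prodSlice H i t)ᵀ).mulVec z s|
            ≤ |z s| + |∑ t ∈ Finset.Icc (i + 1) T, ((prodSlice H i t)ᵀ).mulVec z s| :=
              abs_add_le _ _
          _ ≤ |z s| + ∑ t ∈ Finset.Icc (i + 1) T, |((prodSlice H i t)ᵀ).mulVec z s| := by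
              gcongr
              exact Finset.abs_sum_le_sum_abs _ _
    _ = (∑ s, |z s|)
        + ∑ t ∈ Finset.Icc (i + 1) T, ∑ s, |((prodSlice H i t)ᵀ).mulVec z s| := by
        rw [Finset.sum_add_distrib, Finset.sum_comm]
    _ ≤ 2 + ∑ t ∈ Finset.Icc (i + 1) T, 2 * γ ^ (t - i) := by
        gcongr with t ht
        · exact hv t ht
    _ = 2 + 2 * ∑ t ∈ Finset.Icc (i + 1) T, γ ^ (t - i) := by rw [Finset.mul_sum]
    _ ≤ 2 + 2 * (γ / (1 - γ)) := by gcongr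
    _ = 2 / (1 - γ) := by field_simp; ring
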